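/- (Primal feasibility for isotropic states.) On ℂ^d ⊗ ℂ^d, for every p with 1/d ≤ p < 1, the isotropic states satisfy the Loewner-order inequalities ρ_p ≤ p d · ρ_{1/d} and ρ_{1/d} ≤ ((d−1)/((1−p)d)) · ρ_p, where ρ_q := q Φ_d + (1−q)(I − Φ_d)/(d²−1). Consequently D_Ω(ρ_p ‖ ρ_{1/d}) ≤ log₂( p(d−1)/(1−p) ), and since ρ_{1/d} is separable, D_{Ω,SEP}(ρ_p) ≤ log₂( p(d−1)/(1−p) ). -/

import Mathlib

open scoped BigOperators ComplexOrder
open Filter Topology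

noncomputable section

namespace QRT

open scoped Classical

variable {ι κ : Type*} [Fintype ι] [DecidableEq ι] [Fintype κ] [DecidableEq κ]

/-- A density matrix (quantum state): positive semidefinite with unit trace. -/
def IsState (ρ : Matrix ι ι ℂ) : Prop :=
  ρ.PosSemidef ∧ ρ.trace = 1

/-- Loewner order: `A ≤ B` iff `B - A` is positive semidefinite. -/
def Loewner (A B : Matrix ι ι ℂ) : Prop :=
  (B - A).PosSemidef

/-- Trace norm (sum of singular values): `‖A‖₁ = Tr √(AᴴA)`. -/
def traceNorm (A : Matrix ι ι ℂ) : ℝ :=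
  (((Matrix.posSemidef_conjTranspose_mul_self A).1.eigenvectorUnitary : Matrix ι ι ℂ) *
    Matrix.diagonal (((↑) : ℝ → ℂ) ∘ Real.sqrt ∘
      (Matrix.posSemidef_conjTranspose_mul_self A).1.eigenvalues) *
    (star (Matrix.posSemidef_conjTranspose_mul_self A).1.eigenvectorUnitary :
      Matrix ι ι ℂ)).trace.re

/-- The max-relative entropy `D_max(ρ‖σ)` (base 2); `+∞` if infeasible. -/
def Dmax (ρ σ : Matrix ι ι ℂ) : EReal :=
  sInf {x : EReal | ∃ l : ℝ, 0 < l ∧ Loewner ρ (l • σ) ∧ x = ((Real.logb 2 l : ℝ) : EReal)}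

/-- The projective relative entropy (Hilbert projective metric). -/
def DOmega (ρ σ : Matrix ι ι ℂ) : EReal :=
  Dmax ρ σ + Dmax σ ρ

/-- Support inclusion `supp ρ ⊆ supp σ` for positive semidefinite matrices,
expressed as kernel inclusion `ker σ ⊆ ker ρ`. -/
def SuppLe (ρ σ : Matrix ι ι ℂ) : Prop :=
  ∀ v : ι → ℂ, σ.mulVec v = 0 → ρ.mulVec v = 0

/-- Application of a real function to a Hermitian matrix via the spectral decomposition. -/
def mfun (f : ℝ → ℝ) (A : Matrix ι ι ℂ) : Matrix ι ι ℂ :=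
  if hA : A.IsHermitian then
    (hA.eigenvectorUnitary : Matrix ι ι ℂ) *
      Matrix.diagonal (fun i => (f (hA.eigenvalues i) : ℂ)) *
      (hA.eigenvectorUnitary : Matrix ι ι ℂ).conjTranspose
  else 0

/-- Base-2 matrix logarithm on the support of a positive semidefinite matrix. -/
def mlog2 (A : Matrix ι ι ℂ) : Matrix ι ι ℂ :=
  mfun (fun x => if x ≤ 0 then 0 else Real.logb 2 x) A

/-- Umegaki quantum relative entropy (base 2):
`D(ρ‖σ) = Tr[ρ (log₂ ρ - log₂ σ)]` if `supp ρ ⊆ supp σ`, and `+∞` otherwise. -/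
def Drel (ρ σ : Matrix ι ι ℂ) : EReal :=
  if SuppLe ρ σ then (((ρ * (mlog2 ρ - mlog2 σ)).trace.re : ℝ) : EReal) else ⊤

/-- Relative entropy of a resource: `D_F(ρ) = min_{σ ∈ F} D(ρ‖σ)`. -/
def DF (F : Set (Matrix ι ι ℂ)) (ρ : Matrix ι ι ℂ) : EReal :=
  sInf {x : EReal | ∃ σ ∈ F, x = Drel ρ σ}

/-- Max-relative entropy of a resource. -/
def DmaxF (F : Set (Matrix ι ι ℂ)) (ρ : Matrix ι ι ℂ) : EReal :=
  sInf {x : EReal | ∃ σ ∈ F, x = Dmax ρ σ}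

/-- Projective relative entropy of a resource: `D_{Ω,F}(ρ) = min_{σ ∈ F} D_Ω(ρ‖σ)`. -/
def DOmegaF (F : Set (Matrix ι ι ℂ)) (ρ : Matrix ι ι ℂ) : EReal :=
  sInf {x : EReal | ∃ σ ∈ F, x = DOmega ρ σ}

/-- Min-relative entropy of a resource for a pure state `ψ`:
`D_{min,F}(ψ) = min_{σ∈F} (-log₂⟨ψ|σ|ψ⟩)` where `⟨ψ|σ|ψ⟩ = Tr(ψσ)`. -/
def DminF (F : Set (Matrix ι ι ℂ)) (ψ : Matrix ι ι ℂ) : EReal :=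
  sInf {x : EReal | ∃ σ ∈ F, 0 < ((ψ * σ).trace).re ∧
    x = ((-(Real.logb 2 (((ψ * σ).trace).re)) : ℝ) : EReal)}

/-- The convex cone generated by a set of states. -/
def cone (F : Set (Matrix ι ι ℂ)) : Set (Matrix ι ι ℂ) :=
  {A | ∃ t : ℝ, 0 ≤ t ∧ ∃ σ ∈ F, A = t • σ}

/-- `D_s(ω‖σ) := inf { log₂ λ : λ > 0, λσ - ω ∈ cone(F) }`. -/
def Ds (F : Set (Matrix ι ι ℂ)) (ω σ : Matrix ι ι ℂ) : EReal :=
  sInf {x : EReal | ∃ l : ℝ, 0 < l ∧ (l • σ - ω) ∈ cone F ∧ x = ((Real.logb 2 l : ℝ) : EReal)}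

/-- The free variant of the projective relative entropy:
`D_{Ω,s,F}(ω) := min_{σ∈F} [ D_s(ω‖σ) + D_max(σ‖ω) ]`. -/
def DOmegasF (F : Set (Matrix ι ι ℂ)) (ω : Matrix ι ι ℂ) : EReal :=
  sInf {x : EReal | ∃ σ ∈ F, x = Ds F ω σ + Dmax σ ω}

/-- The standard robustness `R_{s,F}(ρ) := inf{ λ ≥ 0 : ∃ σ ∈ F, (ρ+λσ)/(1+λ) ∈ F }`,
as an extended real (`+∞` if infeasible). -/
def Rs (F : Set (Matrix ι ι ℂ)) (ρ : Matrix ι ι ℂ) : EReal :=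
  sInf {x : EReal | ∃ l : ℝ, 0 ≤ l ∧ (∃ σ ∈ F, ((1 + l)⁻¹ • (ρ + l • σ)) ∈ F) ∧
    x = ((l : ℝ) : EReal)}

/-- `log₂(1 + R_{s,F}(ρ))`, the logarithmic standard robustness. -/
def logRs (F : Set (Matrix ι ι ℂ)) (ρ : Matrix ι ι ℂ) : EReal :=
  sInf {x : EReal | ∃ l : ℝ, 0 ≤ l ∧ (∃ σ ∈ F, ((1 + l)⁻¹ • (ρ + l • σ)) ∈ F) ∧
    x = ((Real.logb 2 (1 + l) : ℝ) : EReal)}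

/-- The Choi matrix of a linear map on matrices. -/
def choi (Λ : Matrix ι ι ℂ →ₗ[ℂ] Matrix κ κ ℂ) : Matrix (ι × κ) (ι × κ) ℂ :=
  Matrix.of fun p q => Λ (Matrix.single p.1 q.1 1) p.2 q.2

/-- Complete positivity, via Choi's theorem. -/
def IsCP (Λ : Matrix ι ι ℂ →ₗ[ℂ] Matrix κ κ ℂ) : Prop :=
  (choi Λ).PosSemidef

/-- Trace non-increasing on positive semidefinite inputs. -/
def TraceNonincreasing (Λ : Matrix ι ι ℂ →ₗ[ℂ] Matrix κ κ ℂ) : Prop :=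
  ∀ A : Matrix ι ι ℂ, A.PosSemidef → ((Λ A).trace).re ≤ (A.trace).re

/-- Normalization `A ↦ A / Tr A`. -/
def normalize (A : Matrix ι ι ℂ) : Matrix ι ι ℂ :=
  (A.trace)⁻¹ • A

/-- A free probabilistic operation: a completely positive trace–non-increasing map
that sends free states of `F` to free states of `F'` after renormalization. -/
def IsFreeOp (F : Set (Matrix ι ι ℂ)) (F' : Set (Matrix κ κ ℂ))
    (Λ : Matrix ι ι ℂ →ₗ[ℂ] Matrix κ κ ℂ) : Prop :=
  IsCP Λ ∧ TraceNonincreasing Λ ∧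
    ∀ σ ∈ F, 0 < ((Λ σ).trace).re → normalize (Λ σ) ∈ F'

/-- `n`-fold tensor (Kronecker) power of a matrix, indexed by `Fin n → ι`. -/
def tpow (ρ : Matrix ι ι ℂ) (n : ℕ) : Matrix (Fin n → ι) (Fin n → ι) ℂ :=
  Matrix.of fun i j => ∏ k, ρ (i k) (j k)

/-- Tensor product of tensor-power-indexed matrices. -/
def tmul {n m : ℕ} (A : Matrix (Fin n → ι) (Fin n → ι) ℂ)
    (B : Matrix (Fin m → ι) (Fin m → ι) ℂ) :
    Matrix (Fin (n + m) → ι) (Fin (n + m) → ι) ℂ :=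
  Matrix.of fun i j =>
    A (fun k => i (Fin.castAdd m k)) (fun k => j (Fin.castAdd m k)) *
      B (fun k => i (Fin.natAdd n k)) (fun k => j (Fin.natAdd n k))

/-- Partial trace over the tensor factor in position `k`. -/
def ptrace {n : ℕ} (σ : Matrix (Fin (n + 1) → ι) (Fin (n + 1) → ι) ℂ) (k : Fin (n + 1)) :
    Matrix (Fin n → ι) (Fin n → ι) ℂ :=
  Matrix.of fun i j => ∑ x : ι, σ (k.insertNth x i) (k.insertNth x j)

/-- Axioms I–IV for a family of free-state sets on tensor powers of `ℂ^d`: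
convex closed sets of states, containing the powers of a full-rank free state,
closed under partial traces and under tensor products. -/
structure IsFreeFamily (d : ℕ)
    (F : ∀ n : ℕ, Set (Matrix (Fin n → Fin d) (Fin n → Fin d) ℂ)) : Prop where
  states : ∀ n, ∀ σ ∈ F n, IsState σ
  convex : ∀ n, Convex ℝ (F n)
  closed : ∀ n, IsClosed (F n)
  fullRank : ∃ σ : Matrix (Fin d) (Fin d) ℂ, IsState σ ∧ σ.PosDef ∧ ∀ n, tpow σ n ∈ F n
  ptrace_mem : ∀ n, ∀ σ ∈ F (n + 1), ∀ k : Fin (n + 1), ptrace σ k ∈ F n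
  tmul_mem : ∀ n m, ∀ σ ∈ F n, ∀ σ' ∈ F m, tmul σ σ' ∈ F (n + m)

variable {I K : ℕ → Type*} [∀ n, Fintype (I n)] [∀ n, DecidableEq (I n)]
  [∀ n, Fintype (K n)] [∀ n, DecidableEq (K n)]

/-- The smallest trace-distance error achievable when transforming `ρseq n` into
`ωseq ⌊rn⌋` by free probabilistic operations. -/
def convErr (F : ∀ n, Set (Matrix (I n) (I n) ℂ)) (F' : ∀ n, Set (Matrix (K n) (K n) ℂ))
    (ρseq : ∀ n, Matrix (I n) (I n) ℂ) (ωseq : ∀ n, Matrix (K n) (K n) ℂ)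
    (r : ℝ) (n : ℕ) : ℝ :=
  sInf {e : ℝ |
    ∃ Λ : Matrix (I n) (I n) ℂ →ₗ[ℂ] Matrix (K ⌊r * n⌋₊) (K ⌊r * n⌋₊) ℂ,
      IsFreeOp (F n) (F' ⌊r * n⌋₊) Λ ∧
      e = (1 / 2) * traceNorm (normalize (Λ (ρseq n)) - ωseq ⌊r * n⌋₊)}

/-- The probabilistic transformation rate `r_prob`, as an extended real. -/
def rprob (F : ∀ n, Set (Matrix (I n) (I n) ℂ)) (F' : ∀ n, Set (Matrix (K n) (K n) ℂ))
    (ρseq : ∀ n, Matrix (I n) (I n) ℂ) (ωseq : ∀ n, Matrix (K n) (K n) ℂ) : EReal :=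
  sSup {x : EReal | ∃ r : ℝ, 0 ≤ r ∧ x = (r : EReal) ∧
    Tendsto (fun n => convErr F F' ρseq ωseq r n) atTop (nhds 0)}

/-- The strong converse probabilistic transformation rate `r†_prob`. -/
def rprobSC (F : ∀ n, Set (Matrix (I n) (I n) ℂ)) (F' : ∀ n, Set (Matrix (K n) (K n) ℂ))
    (ρseq : ∀ n, Matrix (I n) (I n) ℂ) (ωseq : ∀ n, Matrix (K n) (K n) ℂ) : EReal :=
  sSup {x : EReal | ∃ r : ℝ, 0 ≤ r ∧ x = (r : EReal) ∧
    liminf (fun n => convErr F F' ρseq ωseq r n) atTop < 1}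

/-- A pure state `ψ = |v⟩⟨v|` with `‖v‖ = 1`. -/
def IsPure (ψ : Matrix ι ι ℂ) : Prop :=
  IsState ψ ∧ ∃ v : ι → ℂ, ψ = Matrix.of fun i j => v i * (starRingEnd ℂ) (v j)

/-- Tensor product across the A/B bipartition of `n`-copy bipartite operators. -/
def abProd {dA dB n : ℕ} (A : Matrix (Fin n → Fin dA) (Fin n → Fin dA) ℂ)
    (B : Matrix (Fin n → Fin dB) (Fin n → Fin dB) ℂ) :
    Matrix (Fin n → Fin dA × Fin dB) (Fin n → Fin dA × Fin dB) ℂ :=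
  Matrix.of fun i j =>
    A (fun k => (i k).1) (fun k => (j k).1) * B (fun k => (i k).2) (fun k => (j k).2)

/-- Separable states on `n` copies of a bipartite system `ℂ^{dA} ⊗ ℂ^{dB}`, with respect to
the bipartition grouping all `A` factors against all `B` factors. -/
def SEP (dA dB n : ℕ) :
    Set (Matrix (Fin n → Fin dA × Fin dB) (Fin n → Fin dA × Fin dB) ℂ) :=
  closure (convexHull ℝ {ρ | ∃ A B, IsState A ∧ IsState B ∧ ρ = abProd A B})

/-- Separable states on a single copy of `ℂ^{dA} ⊗ ℂ^{dB}`. -/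
def SEP1 (dA dB : ℕ) : Set (Matrix (Fin dA × Fin dB) (Fin dA × Fin dB) ℂ) :=
  closure (convexHull ℝ
    {ρ | ∃ (A : Matrix (Fin dA) (Fin dA) ℂ) (B : Matrix (Fin dB) (Fin dB) ℂ),
      IsState A ∧ IsState B ∧ ρ = Matrix.of fun p q => A p.1 q.1 * B p.2 q.2})

/-- Partial transpose on the second subsystem (single copy). -/
def ptrans1 {dA dB : ℕ} (M : Matrix (Fin dA × Fin dB) (Fin dA × Fin dB) ℂ) :
    Matrix (Fin dA × Fin dB) (Fin dA × Fin dB) ℂ :=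
  Matrix.of fun p q => M (p.1, q.2) (q.1, p.2)

/-- PPT states on a single copy. -/
def PPT1 (dA dB : ℕ) : Set (Matrix (Fin dA × Fin dB) (Fin dA × Fin dB) ℂ) :=
  {σ | IsState σ ∧ (ptrans1 σ).PosSemidef}

/-- Partial transpose over all `B` factors of an `n`-copy bipartite system. -/
def ptransN {dA dB n : ℕ}
    (M : Matrix (Fin n → Fin dA × Fin dB) (Fin n → Fin dA × Fin dB) ℂ) :
    Matrix (Fin n → Fin dA × Fin dB) (Fin n → Fin dA × Fin dB) ℂ :=
  Matrix.of fun i j => M (fun k => ((i k).1, (j k).2)) (fun k => ((j k).1, (i k).2))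

/-- PPT states on `n` copies, w.r.t. the bipartition grouping all `A` factors
against all `B` factors. -/
def PPTn (dA dB n : ℕ) :
    Set (Matrix (Fin n → Fin dA × Fin dB) (Fin n → Fin dA × Fin dB) ℂ) :=
  {σ | IsState σ ∧ (ptransN σ).PosSemidef}

/-- The maximally entangled state `Φ_d` on `ℂ^d ⊗ ℂ^d`. -/
def PhiMax (d : ℕ) : Matrix (Fin d × Fin d) (Fin d × Fin d) ℂ :=
  Matrix.of fun p q => if p.1 = p.2 ∧ q.1 = q.2 then ((d : ℂ))⁻¹ else 0

/-- The isotropic state `ρ_p = p Φ_d + (1-p)(I - Φ_d)/(d²-1)`. -/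
def iso (d : ℕ) (p : ℝ) : Matrix (Fin d × Fin d) (Fin d × Fin d) ℂ :=
  p • PhiMax d + ((1 - p) / ((d : ℝ) ^ 2 - 1)) • (1 - PhiMax d)


/-- outer product matrix -/
def outer (v : ι → ℂ) : Matrix ι ι ℂ := Matrix.of fun i j => v i * (starRingEnd ℂ) (v j)

lemma outer_posSemidef (v : ι → ℂ) : (outer v).PosSemidef := by
  rw [Matrix.posSemidef_iff_dotProduct_mulVec]
  constructor
  · ext i j
    simp [outer, Matrix.conjTranspose_apply, mul_comm]
  · intro x
    have : dotProduct (star x) ((outer v).mulVec x)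
        = (∑ i, (starRingEnd ℂ) (x i) * v i) * (starRingEnd ℂ) (∑ i, (starRingEnd ℂ) (x i) * v i) := by
      simp only [dotProduct, Matrix.mulVec, outer, Matrix.of_apply, dotProduct, Pi.star_apply,
        map_sum, map_mul, RingHomCompTriple.comp_apply, RingHom.id_apply, Finset.mul_sum,
        Finset.sum_mul, RingHomInvPair.comp_apply]
      rw [Finset.sum_comm]
      apply Finset.sum_congr rfl; intro i _
      apply Finset.sum_congr rfl; intro j _
      simp [RCLike.star_def]
      ring
    rw [this, Complex.mul_conj]
    exact_mod_cast Complex.normSq_nonneg _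

set_option linter.unusedSectionVars false

lemma outer_trace (v : ι → ℂ) : (outer v).trace = ∑ i, (Complex.normSq (v i) : ℂ) := by
  simp [outer, Matrix.trace, Matrix.diag, Complex.mul_conj]

lemma outer_mul_self (v : ι → ℂ) (h : ∑ i, (Complex.normSq (v i) : ℂ) = 1) :
    outer v * outer v = outer v := by
  ext i j
  simp only [Matrix.mul_apply, outer, Matrix.of_apply]
  have : ∀ k, v i * (starRingEnd ℂ) (v k) * (v k * (starRingEnd ℂ) (v j))
      = (Complex.normSq (v k) : ℂ) * (v i * (starRingEnd ℂ) (v j)) := by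
    intro k; rw [← Complex.mul_conj]; ring
  simp_rw [this, ← Finset.sum_mul, h, one_mul]

lemma herm_idem_posSemidef {M : Matrix ι ι ℂ} (h1 : M.IsHermitian) (h2 : M * M = M) :
    M.PosSemidef := by
  have : M.conjTranspose * M = M := by rw [Matrix.IsHermitian] at h1; rw [h1, h2]
  rw [← this]; exact Matrix.posSemidef_conjTranspose_mul_self M

lemma one_sub_posSemidef {M : Matrix ι ι ℂ} (h1 : M.IsHermitian) (h2 : M * M = M) :
    (1 - M).PosSemidef := by
  apply herm_idem_posSemidef
  · exact (Matrix.isHermitian_one).sub h1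
  · have : (1 - M) * (1 - M) = 1 - M - M + M * M := by noncomm_ring
    rw [this, h2]; abel

lemma smul_posSemidef {M : Matrix ι ι ℂ} (h : M.PosSemidef) {r : ℝ} (hr : 0 ≤ r) :
    (r • M).PosSemidef := by
  have hc : (r • M) = (r : ℂ) • M := by ext i j; simp [Complex.real_smul]
  rw [hc]
  rw [Matrix.posSemidef_iff_dotProduct_mulVec]
  constructor
  · have h1 : M.conjTranspose = M := h.1
    rw [Matrix.IsHermitian, Matrix.conjTranspose_smul, h1]
    congr 1
    simp
  · intro x
    have := h.dotProduct_mulVec_nonneg x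
    simp only [Matrix.smul_mulVec, dotProduct_smul, smul_eq_mul]
    exact mul_nonneg (by exact_mod_cast hr) this

def vPhi (d : ℕ) : Fin d × Fin d → ℂ := fun p => if p.1 = p.2 then (((Real.sqrt d : ℝ) : ℂ))⁻¹ else 0

lemma PhiMax_eq_outer (d : ℕ) : PhiMax d = outer (vPhi d) := by
  ext p q
  simp only [PhiMax, outer, vPhi, Matrix.of_apply]
  by_cases h1 : p.1 = p.2 <;> by_cases h2 : q.1 = q.2 <;> simp [h1, h2]
  rw [← Complex.ofReal_inv, ← Complex.ofReal_mul, ← mul_inv,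
    Real.mul_self_sqrt (by positivity), Complex.ofReal_inv, Complex.ofReal_natCast]

lemma vPhi_normSq (d : ℕ) (hd : 0 < d) : ∑ i, (Complex.normSq (vPhi d i) : ℂ) = 1 := by
  rw [Fintype.sum_prod_type]
  have : ∀ i : Fin d, ∑ j : Fin d, (Complex.normSq (vPhi d (i, j)) : ℂ) = ((d : ℂ))⁻¹ := by
    intro i
    rw [Finset.sum_eq_single i]
    · have : vPhi d (i, i) = (((Real.sqrt d)⁻¹ : ℝ) : ℂ) := by
        simp [vPhi]
      rw [this, Complex.normSq_ofReal, ← mul_inv, Real.mul_self_sqrt (Nat.cast_nonneg d)]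
      push_cast
      ring
    · intro j _ hj; simp [vPhi, Ne.symm hj]
    · simp
  simp_rw [this, Finset.sum_const, Finset.card_univ, Fintype.card_fin, nsmul_eq_mul]
  rw [mul_inv_cancel₀]
  exact_mod_cast hd.ne'

lemma PhiMax_posSemidef (d : ℕ) : (PhiMax d).PosSemidef := by
  rw [PhiMax_eq_outer]; exact outer_posSemidef _

lemma PhiMax_mul_self {d : ℕ} (hd : 0 < d) : PhiMax d * PhiMax d = PhiMax d := by
  rw [PhiMax_eq_outer]; exact outer_mul_self _ (vPhi_normSq d hd)

lemma one_sub_PhiMax_posSemidef {d : ℕ} (hd : 0 < d) : (1 - PhiMax d).PosSemidef :=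
  one_sub_posSemidef (PhiMax_posSemidef d).1 (PhiMax_mul_self hd)

lemma iso_comb (d : ℕ) (a q p : ℝ) :
    a • iso d q - iso d p
      = (a * q - p) • PhiMax d
        + ((a * (1 - q) - (1 - p)) / ((d : ℝ) ^ 2 - 1)) • (1 - PhiMax d) := by
  unfold iso
  match_scalars <;> ring

lemma loewner_fact1 {d : ℕ} (hd : 2 ≤ d) {p : ℝ} (hp : (d : ℝ)⁻¹ ≤ p) (hp1 : p < 1) :
    ((p * (d : ℝ)) • iso d (d : ℝ)⁻¹ - iso d p).PosSemidef := by
  have hd0 : (0 : ℝ) < (d : ℝ) := by exact_mod_cast Nat.lt_of_lt_of_le two_pos hd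
  have hd2 : (2 : ℝ) ≤ (d : ℝ) := by exact_mod_cast hd
  have hpd : 1 ≤ p * (d : ℝ) := by
    rw [← inv_mul_cancel₀ hd0.ne']
    exact mul_le_mul_of_nonneg_right hp hd0.le
  have e := iso_comb d (p * (d : ℝ)) (d : ℝ)⁻¹ p
  have h0 : p * (d : ℝ) * (d : ℝ)⁻¹ - p = 0 := by field_simp; ring
  rw [h0, zero_smul, zero_add] at e
  rw [e]
  apply smul_posSemidef (one_sub_PhiMax_posSemidef (by omega))
  apply div_nonneg
  · have : p * (d : ℝ) * (1 - (d : ℝ)⁻¹) - (1 - p) = p * (d : ℝ) - 1 := by field_simp; ring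
    rw [this]; linarith
  · nlinarith

lemma loewner_fact2 {d : ℕ} (hd : 2 ≤ d) {p : ℝ} (hp : (d : ℝ)⁻¹ ≤ p) (hp1 : p < 1) :
    ((((d : ℝ) - 1) / ((1 - p) * (d : ℝ))) • iso d p - iso d (d : ℝ)⁻¹).PosSemidef := by
  have hd0 : (0 : ℝ) < (d : ℝ) := by exact_mod_cast Nat.lt_of_lt_of_le two_pos hd
  have hd2 : (2 : ℝ) ≤ (d : ℝ) := by exact_mod_cast hd
  have h1p : (0 : ℝ) < 1 - p := by linarith
  have hpd : 1 ≤ p * (d : ℝ) := by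
    rw [← inv_mul_cancel₀ hd0.ne']
    exact mul_le_mul_of_nonneg_right hp hd0.le
  have e := iso_comb d (((d : ℝ) - 1) / ((1 - p) * (d : ℝ))) p (d : ℝ)⁻¹
  have h0 : (((d : ℝ) - 1) / ((1 - p) * (d : ℝ)) * (1 - p) - (1 - (d : ℝ)⁻¹)) / ((d : ℝ) ^ 2 - 1) = 0 := by
    rw [div_eq_zero_iff]; left; field_simp; ring
  rw [h0, zero_smul, add_zero] at e
  rw [e]
  apply smul_posSemidef (PhiMax_posSemidef d)
  have : ((d : ℝ) - 1) / ((1 - p) * (d : ℝ)) * p - (d : ℝ)⁻¹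
      = (p * (d : ℝ) - 1) / ((1 - p) * (d : ℝ)) := by field_simp; ring
  rw [this]
  apply div_nonneg (by linarith) (by positivity)

lemma I_pow_single {d : ℕ} (j : Fin d) (n : Fin d → ℕ) (z : ℂ) :
    ∏ k, z ^ (n k * (if j = k then 1 else 0)) = z ^ (n j) := by
  rw [Finset.prod_eq_single j]
  · simp
  · intro k _ hk
    rw [if_neg (fun h => hk h.symm)]
    simp
  · simp

lemma summand_factor {d : ℕ} (p1 p2 q1 q2 : Fin d) (c : Fin d → Fin 4) :
    Complex.I ^ ((c p1 : ℕ)) * (-Complex.I) ^ ((c q1 : ℕ)) *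
      ((-Complex.I) ^ ((c p2 : ℕ)) * Complex.I ^ ((c q2 : ℕ)))
    = ∏ k, (Complex.I ^ ((c k : ℕ) * ((if p1 = k then 1 else 0) + (if q2 = k then 1 else 0))) *
        (-Complex.I) ^ ((c k : ℕ) * ((if q1 = k then 1 else 0) + (if p2 = k then 1 else 0)))) := by
  simp_rw [mul_add, pow_add]
  rw [Finset.prod_mul_distrib, Finset.prod_mul_distrib, Finset.prod_mul_distrib]
  rw [I_pow_single p1, I_pow_single q2, I_pow_single q1, I_pow_single p2]
  ring

lemma inner_sum (a b : ℕ) (ha : a ≤ 2) (hb : b ≤ 2) :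
    ∑ x : Fin 4, (Complex.I ^ ((x : ℕ) * a) * (-Complex.I) ^ ((x : ℕ) * b))
      = if a = b then 4 else 0 := by
  rw [Fin.sum_univ_four]
  norm_num [show ((0:Fin 4):ℕ) = 0 from rfl, show ((1:Fin 4):ℕ) = 1 from rfl,
    show ((2:Fin 4):ℕ) = 2 from rfl, show ((3:Fin 4):ℕ) = 3 from rfl]
  interval_cases a <;> interval_cases b <;>
    norm_num [Complex.ext_iff, pow_succ]

lemma cond_equiv {d : ℕ} (p1 p2 q1 q2 : Fin d) :
    (∀ k : Fin d, ((if p1 = k then 1 else 0) + (if q2 = k then 1 else 0) : ℕ)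
        = (if q1 = k then 1 else 0) + (if p2 = k then 1 else 0))
      ↔ ((p1 = q1 ∧ p2 = q2) ∨ (p1 = p2 ∧ q1 = q2)) := by
  constructor
  · intro h
    by_cases h1 : p1 = q1
    · subst h1
      left
      refine ⟨rfl, ?_⟩
      have hc := h p2
      by_contra hne
      rw [if_neg (fun hh : q2 = p2 => hne hh.symm), if_pos (rfl : p2 = p2)] at hc
      omega
    · right
      have ha := h p1
      have hb := h q1
      rw [if_pos (rfl : p1 = p1), if_neg (fun hh : q1 = p1 => h1 hh.symm)] at ha
      rw [if_neg h1, if_pos (rfl : q1 = q1)] at hb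
      constructor
      · by_cases h3 : p2 = p1
        · exact h3.symm
        · exfalso
          rw [if_neg h3] at ha
          split_ifs at ha <;> omega
      · by_cases h4 : q2 = q1
        · exact h4.symm
        · exfalso
          rw [if_neg h4] at hb
          split_ifs at hb <;> omega
  · rintro (⟨hA, hB⟩ | ⟨hA, hB⟩) k
    · subst hA; subst hB; rfl
    · subst hA; subst hB; exact add_comm _ _

lemma key_sum {d : ℕ} (p1 p2 q1 q2 : Fin d) :
    ∑ c : Fin d → Fin 4,
      (Complex.I ^ ((c p1 : ℕ)) * (-Complex.I) ^ ((c q1 : ℕ)) *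
        ((-Complex.I) ^ ((c p2 : ℕ)) * Complex.I ^ ((c q2 : ℕ))))
    = if (p1 = q1 ∧ p2 = q2) ∨ (p1 = p2 ∧ q1 = q2) then (4 : ℂ) ^ d else 0 := by
  set A : Fin d → ℕ := fun k => (if p1 = k then 1 else 0) + (if q2 = k then 1 else 0) with hA
  set B : Fin d → ℕ := fun k => (if q1 = k then 1 else 0) + (if p2 = k then 1 else 0) with hB
  have hstep : ∀ c : Fin d → Fin 4,
      (Complex.I ^ ((c p1 : ℕ)) * (-Complex.I) ^ ((c q1 : ℕ)) *
        ((-Complex.I) ^ ((c p2 : ℕ)) * Complex.I ^ ((c q2 : ℕ))))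
      = ∏ k, (Complex.I ^ ((c k : ℕ) * A k) * (-Complex.I) ^ ((c k : ℕ) * B k)) := by
    intro c
    rw [hA, hB]
    exact summand_factor p1 p2 q1 q2 c
  simp_rw [hstep]
  have swap := (Fintype.prod_sum (fun (k : Fin d) (x : Fin 4) =>
      Complex.I ^ ((x : ℕ) * A k) * (-Complex.I) ^ ((x : ℕ) * B k))).symm
  rw [swap]
  have hab : ∀ k : Fin d,
      (∑ x : Fin 4, (Complex.I ^ ((x : ℕ) * A k) * (-Complex.I) ^ ((x : ℕ) * B k)))
      = if A k = B k then (4 : ℂ) else 0 := by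
    intro k
    apply inner_sum
    · rw [hA]; dsimp only; split_ifs <;> omega
    · rw [hB]; dsimp only; split_ifs <;> omega
  have hcond : (∀ k, A k = B k) ↔ ((p1 = q1 ∧ p2 = q2) ∨ (p1 = p2 ∧ q1 = q2)) := by
    rw [hA, hB]; exact cond_equiv p1 p2 q1 q2
  calc ∏ k, (∑ x : Fin 4, (Complex.I ^ ((x : ℕ) * A k) * (-Complex.I) ^ ((x : ℕ) * B k)))
      = ∏ k, (if A k = B k then (4 : ℂ) else 0) := Finset.prod_congr rfl (fun k _ => hab k)
    _ = if (p1 = q1 ∧ p2 = q2) ∨ (p1 = p2 ∧ q1 = q2) then (4 : ℂ) ^ d else 0 := by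
        by_cases hall : ∀ k, A k = B k
        · rw [if_pos (hcond.mp hall)]
          calc ∏ k, (if A k = B k then (4 : ℂ) else 0) = ∏ _k : Fin d, (4 : ℂ) :=
              Finset.prod_congr rfl (fun k _ => if_pos (hall k))
            _ = (4 : ℂ) ^ d := by simp
        · rw [if_neg (fun hcs => hall (hcond.mpr hcs))]
          push_neg at hall
          obtain ⟨k0, hk0⟩ := hall
          exact Finset.prod_eq_zero (Finset.mem_univ k0) (if_neg hk0)

def psiv (d : ℕ) (c : Fin d → Fin 4) : Fin d → ℂ :=
  fun j => (((Real.sqrt d)⁻¹ : ℝ) : ℂ) * Complex.I ^ ((c j : ℕ))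

def basisv (d : ℕ) (j : Fin d) : Fin d → ℂ := fun i => if i = j then 1 else 0

lemma hs_sq (d : ℕ) : ((((Real.sqrt d)⁻¹ : ℝ) : ℂ)) * ((((Real.sqrt d)⁻¹ : ℝ) : ℂ)) = ((d : ℂ))⁻¹ := by
  rw [← Complex.ofReal_mul, ← mul_inv, Real.mul_self_sqrt (Nat.cast_nonneg d)]
  push_cast
  ring

lemma psiv_normSq (d : ℕ) (hd : 0 < d) (c : Fin d → Fin 4) :
    ∑ i, (Complex.normSq (psiv d c i) : ℂ) = 1 := by
  have h1 : ∀ i, (Complex.normSq (psiv d c i) : ℂ) = ((d : ℂ))⁻¹ := by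
    intro i
    rw [psiv, map_mul, Complex.normSq_ofReal, map_pow, Complex.normSq_I, one_pow, mul_one,
      ← mul_inv, Real.mul_self_sqrt (Nat.cast_nonneg d)]
    push_cast
    ring
  simp_rw [h1, Finset.sum_const, Finset.card_univ, Fintype.card_fin, nsmul_eq_mul]
  rw [mul_inv_cancel₀]
  exact_mod_cast hd.ne'

lemma conj_psiv_normSq (d : ℕ) (hd : 0 < d) (c : Fin d → Fin 4) :
    ∑ i, (Complex.normSq ((starRingEnd ℂ) (psiv d c i)) : ℂ) = 1 := by
  simp_rw [Complex.normSq_conj]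
  exact psiv_normSq d hd c

lemma basisv_normSq (d : ℕ) (j : Fin d) :
    ∑ i, (Complex.normSq (basisv d j i) : ℂ) = 1 := by
  rw [Finset.sum_eq_single j]
  · simp [basisv]
  · intro i _ hi; simp [basisv, hi]
  · simp

lemma Mc_entry (d : ℕ) (c : Fin d → Fin 4) (p1 p2 q1 q2 : Fin d) :
    outer (psiv d c) p1 q1 * outer (fun j => (starRingEnd ℂ) (psiv d c j)) p2 q2
    = (((d : ℂ)) ^ 2)⁻¹ *
        (Complex.I ^ ((c p1 : ℕ)) * (-Complex.I) ^ ((c q1 : ℕ)) *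
          ((-Complex.I) ^ ((c p2 : ℕ)) * Complex.I ^ ((c q2 : ℕ)))) := by
  simp only [outer, psiv, Matrix.of_apply, map_mul, Complex.conj_ofReal, map_pow,
    Complex.conj_I, Complex.conj_conj, Complex.conj_neg_I]
  have h4 : ∀ z1 z2 z3 z4 : ℂ,
      ((((Real.sqrt d)⁻¹ : ℝ) : ℂ) * z1) * ((((Real.sqrt d)⁻¹ : ℝ) : ℂ) * z2) *
        (((((Real.sqrt d)⁻¹ : ℝ) : ℂ) * z3) * ((((Real.sqrt d)⁻¹ : ℝ) : ℂ) * z4))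
      = (((((Real.sqrt d)⁻¹ : ℝ) : ℂ)) * ((((Real.sqrt d)⁻¹ : ℝ) : ℂ))) *
        (((((Real.sqrt d)⁻¹ : ℝ) : ℂ)) * ((((Real.sqrt d)⁻¹ : ℝ) : ℂ))) *
        (z1 * z2 * (z3 * z4)) := by intros; ring
  rw [h4, hs_sq d, ← mul_inv, ← sq]

lemma sum_Mc_entry (d : ℕ) (p1 p2 q1 q2 : Fin d) :
    ∑ c : Fin d → Fin 4,
      (outer (psiv d c) p1 q1 * outer (fun j => (starRingEnd ℂ) (psiv d c j)) p2 q2)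
    = (((d : ℂ)) ^ 2)⁻¹ *
        (if (p1 = q1 ∧ p2 = q2) ∨ (p1 = p2 ∧ q1 = q2) then (4 : ℂ) ^ d else 0) := by
  simp_rw [Mc_entry d _ p1 p2 q1 q2]
  rw [← Finset.mul_sum, key_sum]

lemma sum_Pj_entry (d : ℕ) (p1 p2 q1 q2 : Fin d) :
    ∑ j : Fin d, (outer (basisv d j) p1 q1 * outer (basisv d j) p2 q2)
    = if q1 = p1 ∧ p2 = p1 ∧ q2 = p1 then 1 else 0 := by
  have he : ∀ j a b : Fin d, outer (basisv d j) a b = if a = j ∧ b = j then 1 else 0 := by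
    intro j a b
    simp only [outer, basisv, Matrix.of_apply]
    by_cases h1 : a = j <;> by_cases h2 : b = j <;> simp [h1, h2]
  simp_rw [he]
  rw [Finset.sum_eq_single p1]
  · by_cases h1 : q1 = p1 <;> by_cases h2 : p2 = p1 <;> by_cases h3 : q2 = p1 <;>
      simp [h1, h2, h3]
  · intro j _ hj
    rw [if_neg (fun hh => hj hh.1.symm)]
    ring
  · simp

def prodMat {d : ℕ} (A B : Matrix (Fin d) (Fin d) ℂ) :
    Matrix (Fin d × Fin d) (Fin d × Fin d) ℂ :=
  Matrix.of fun p q => A p.1 q.1 * B p.2 q.2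

set_option maxHeartbeats 2000000 in
lemma iso_decomp (d : ℕ) (hd : 2 ≤ d) :
    iso d (d : ℝ)⁻¹
      = (∑ j : Fin d, ((1 : ℝ)/(d*(d+1))) • prodMat (outer (basisv d j)) (outer (basisv d j)))
        + ∑ c : Fin d → Fin 4, ((d : ℝ)/(((d : ℝ)+1)*4^d)) •
            prodMat (outer (psiv d c)) (outer (fun j => (starRingEnd ℂ) (psiv d c j))) := by
  have hd0 : (0 : ℝ) < (d : ℝ) := by exact_mod_cast Nat.lt_of_lt_of_le two_pos hd
  have hdC : ((d : ℂ)) ≠ 0 := by exact_mod_cast hd0.ne'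
  have hd1C : ((d : ℂ)) + 1 ≠ 0 := by
    have : ((d : ℂ)) + 1 = ((d + 1 : ℕ) : ℂ) := by push_cast; ring
    rw [this]
    exact_mod_cast Nat.succ_ne_zero d
  have h4C : ((4 : ℂ)) ^ d ≠ 0 := pow_ne_zero d (by norm_num)
  have hd2C : ((d : ℂ)) ^ 2 - 1 ≠ 0 := by
    intro h
    have h2 : ((d : ℂ)) ^ 2 = ((d^2 : ℕ) : ℂ) := by push_cast; ring
    have : ((d ^ 2 : ℕ) : ℂ) = ((1 : ℕ) : ℂ) := by rw [← h2]; push_cast; linear_combination h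
    have : d ^ 2 = 1 := Nat.cast_injective this
    nlinarith [this, hd]
  ext p q
  rcases p with ⟨p1, p2⟩
  rcases q with ⟨q1, q2⟩
  simp only [iso, PhiMax, Matrix.add_apply, Matrix.smul_apply, Matrix.sub_apply,
    Matrix.one_apply, Matrix.of_apply, Matrix.sum_apply, prodMat, Complex.real_smul]
  rw [show (∑ j : Fin d, (((1 : ℝ)/(d*(d+1)) : ℝ) : ℂ) *
        (outer (basisv d j) p1 q1 * outer (basisv d j) p2 q2))
      = (((1 : ℝ)/(d*(d+1)) : ℝ) : ℂ) *
        ∑ j : Fin d, (outer (basisv d j) p1 q1 * outer (basisv d j) p2 q2) from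
    (Finset.mul_sum _ _ _).symm]
  rw [show (∑ c : Fin d → Fin 4, (((d : ℝ)/(((d : ℝ)+1)*4^d) : ℝ) : ℂ) *
        (outer (psiv d c) p1 q1 * outer (fun j => (starRingEnd ℂ) (psiv d c j)) p2 q2))
      = (((d : ℝ)/(((d : ℝ)+1)*4^d) : ℝ) : ℂ) *
        ∑ c : Fin d → Fin 4,
          (outer (psiv d c) p1 q1 * outer (fun j => (starRingEnd ℂ) (psiv d c j)) p2 q2) from
    (Finset.mul_sum _ _ _).symm]
  rw [sum_Pj_entry d p1 p2 q1 q2, sum_Mc_entry d p1 p2 q1 q2]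
  push_cast
  simp only [Prod.mk.injEq]
  split_ifs <;> first | (exfalso; grind) | (field_simp; ring) | field_simp

lemma outer_isState (v : ι → ℂ) (h : ∑ i, (Complex.normSq (v i) : ℂ) = 1) :
    IsState (outer v) :=
  ⟨outer_posSemidef v, by rw [outer_trace, h]⟩

lemma iso_sep (d : ℕ) (hd : 2 ≤ d) : iso d (d : ℝ)⁻¹ ∈ SEP1 d d := by
  rw [SEP1]
  have hd0 : (0 : ℝ) < (d : ℝ) := by exact_mod_cast Nat.lt_of_lt_of_le two_pos hd
  have hdn : 0 < d := by omega
  apply subset_closure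
  set S := {ρ : Matrix (Fin d × Fin d) (Fin d × Fin d) ℂ |
    ∃ (A : Matrix (Fin d) (Fin d) ℂ) (B : Matrix (Fin d) (Fin d) ℂ),
      IsState A ∧ IsState B ∧ ρ = Matrix.of fun p q => A p.1 q.1 * B p.2 q.2} with hS
  set w : (Fin d ⊕ (Fin d → Fin 4)) → ℝ := fun t =>
    Sum.rec (fun _ => (1 : ℝ)/(d*(d+1))) (fun _ => (d : ℝ)/(((d : ℝ)+1)*4^d)) t with hw
  set z : (Fin d ⊕ (Fin d → Fin 4)) → Matrix (Fin d × Fin d) (Fin d × Fin d) ℂ := fun t =>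
    Sum.rec (fun j => prodMat (outer (basisv d j)) (outer (basisv d j)))
      (fun c => prodMat (outer (psiv d c)) (outer (fun j => (starRingEnd ℂ) (psiv d c j)))) t
      with hz
  have hdecomp : iso d (d : ℝ)⁻¹ = ∑ t, w t • z t := by
    rw [Fintype.sum_sum_type]
    exact iso_decomp d hd
  rw [hdecomp]
  apply (convex_convexHull ℝ S).sum_mem
  · rintro (j | c) _ <;> positivity
  · rw [Fintype.sum_sum_type]
    simp only [hw, Finset.sum_const, Finset.card_univ, Fintype.card_fin, nsmul_eq_mul,
      Fintype.card_fun, Fintype.card_fin]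
    have h4 : (0:ℝ) < 4 ^ d := by positivity
    field_simp
    push_cast
    ring
  · rintro (j | c) _
    · apply subset_convexHull
      refine ⟨outer (basisv d j), outer (basisv d j),
        outer_isState _ (basisv_normSq d j), outer_isState _ (basisv_normSq d j), rfl⟩
    · apply subset_convexHull
      refine ⟨outer (psiv d c), outer (fun j => (starRingEnd ℂ) (psiv d c j)),
        outer_isState _ (psiv_normSq d hdn c),
        outer_isState _ (conj_psiv_normSq d hdn c), rfl⟩


/-- **primal feasibility for isotropic states.**
For `1/d ≤ p < 1`, the isotropic states satisfy `ρ_p ≤ pd·ρ_{1/d}` and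
`ρ_{1/d} ≤ ((d-1)/((1-p)d))·ρ_p` in the Loewner order; consequently
`D_Ω(ρ_p‖ρ_{1/d}) ≤ log₂(p(d-1)/(1-p))`, and since `ρ_{1/d}` is separable,
`D_{Ω,SEP}(ρ_p) ≤ log₂(p(d-1)/(1-p))`. -/
theorem isotropic_primal_feasibility {d : ℕ} (hd : 2 ≤ d)
    (p : ℝ) (hp : (d : ℝ)⁻¹ ≤ p) (hp1 : p < 1) :
    Loewner (iso d p) ((p * (d : ℝ)) • iso d (d : ℝ)⁻¹) ∧
    Loewner (iso d (d : ℝ)⁻¹) ((((d : ℝ) - 1) / ((1 - p) * (d : ℝ))) • iso d p) ∧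
    DOmega (iso d p) (iso d (d : ℝ)⁻¹)
        ≤ ((Real.logb 2 (p * ((d : ℝ) - 1) / (1 - p)) : ℝ) : EReal) ∧
    DOmegaF (SEP1 d d) (iso d p)
        ≤ ((Real.logb 2 (p * ((d : ℝ) - 1) / (1 - p)) : ℝ) : EReal) := by
  have hd0 : (0 : ℝ) < (d : ℝ) := by exact_mod_cast Nat.lt_of_lt_of_le two_pos hd
  have hd2 : (2 : ℝ) ≤ (d : ℝ) := by exact_mod_cast hd
  have h1p : (0 : ℝ) < 1 - p := by linarith
  have hpd : 1 ≤ p * (d : ℝ) := by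
    rw [← inv_mul_cancel₀ hd0.ne']
    exact mul_le_mul_of_nonneg_right hp hd0.le
  have hl1 : (0 : ℝ) < p * (d : ℝ) := by linarith
  have hl2 : (0 : ℝ) < ((d : ℝ) - 1) / ((1 - p) * (d : ℝ)) := by
    apply div_pos (by linarith) (by positivity)
  have hL1 : Loewner (iso d p) ((p * (d : ℝ)) • iso d (d : ℝ)⁻¹) := loewner_fact1 hd hp hp1
  have hL2 : Loewner (iso d (d : ℝ)⁻¹) ((((d : ℝ) - 1) / ((1 - p) * (d : ℝ))) • iso d p) :=
    loewner_fact2 hd hp hp1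
  have hD1 : Dmax (iso d p) (iso d (d : ℝ)⁻¹)
      ≤ ((Real.logb 2 (p * (d : ℝ)) : ℝ) : EReal) :=
    sInf_le ⟨p * (d : ℝ), hl1, hL1, rfl⟩
  have hD2 : Dmax (iso d (d : ℝ)⁻¹) (iso d p)
      ≤ ((Real.logb 2 (((d : ℝ) - 1) / ((1 - p) * (d : ℝ))) : ℝ) : EReal) :=
    sInf_le ⟨((d : ℝ) - 1) / ((1 - p) * (d : ℝ)), hl2, hL2, rfl⟩
  have hsum : Real.logb 2 (p * (d : ℝ)) + Real.logb 2 (((d : ℝ) - 1) / ((1 - p) * (d : ℝ)))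
      = Real.logb 2 (p * ((d : ℝ) - 1) / (1 - p)) := by
    rw [← Real.logb_mul hl1.ne' hl2.ne']
    congr 1
    field_simp
  have hDOm : DOmega (iso d p) (iso d (d : ℝ)⁻¹)
      ≤ ((Real.logb 2 (p * ((d : ℝ) - 1) / (1 - p)) : ℝ) : EReal) := by
    calc DOmega (iso d p) (iso d (d : ℝ)⁻¹)
        ≤ ((Real.logb 2 (p * (d : ℝ)) : ℝ) : EReal)
          + ((Real.logb 2 (((d : ℝ) - 1) / ((1 - p) * (d : ℝ))) : ℝ) : EReal) :=
        add_le_add hD1 hD2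
      _ = ((Real.logb 2 (p * ((d : ℝ) - 1) / (1 - p)) : ℝ) : EReal) := by
        rw [← EReal.coe_add, hsum]
  refine ⟨hL1, hL2, hDOm, ?_⟩
  calc DOmegaF (SEP1 d d) (iso d p)
      ≤ DOmega (iso d p) (iso d (d : ℝ)⁻¹) := sInf_le ⟨iso d (d : ℝ)⁻¹, iso_sep d hd, rfl⟩
    _ ≤ _ := hDOm


end QRT
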